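/- For all x ≥ 0 and y ≥ 0, one has x^{5/2} + (5/2) x^{3/2} y - (x+y)^{5/2} ≥ - (15/8) x^{1/2} y^2 - y^{5/2}. -/
import Mathlib

lemma aux_rpow (z : ℝ) (hz : 0 ≤ z) (n : ℕ) :
    z ^ ((n : ℝ) / 2) = Real.sqrt z ^ n := by
  rw [Real.sqrt_eq_rpow, ← Real.rpow_natCast (z ^ ((1:ℝ)/2)) n, ← Real.rpow_mul hz]
  congr 1
  ring

lemma aux_poly (a b : ℝ) (ha : 0 ≤ a) (hb : 0 ≤ b) :
    (a ^ 2 + b ^ 2) ^ 5 ≤ (a ^ 5 + 5 / 2 * a ^ 3 * b ^ 2 + 15 / 8 * a * b ^ 4 + b ^ 5) ^ 2 := by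
  nlinarith [mul_nonneg ha hb, sq_nonneg (a - b), sq_nonneg (a + b),
    mul_nonneg (mul_nonneg ha hb) (pow_nonneg hb 4),
    mul_nonneg (mul_nonneg (mul_nonneg ha hb) (pow_nonneg hb 4)) (sq_nonneg (a - b)),
    mul_nonneg (mul_nonneg (mul_nonneg ha hb) (pow_nonneg hb 4)) (sq_nonneg (a - b/2)),
    mul_nonneg (mul_nonneg (mul_nonneg ha hb) (pow_nonneg hb 4)) (sq_nonneg (b - a/2)),
    mul_nonneg (mul_nonneg (mul_nonneg ha hb) (pow_nonneg hb 4)) (sq_nonneg a),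
    mul_nonneg (mul_nonneg (mul_nonneg ha hb) (pow_nonneg hb 4)) (sq_nonneg b)]

/-- For `x, y ≥ 0`, `x^{5/2} + (5/2) x^{3/2} y - (x+y)^{5/2} ≥ -(15/8) x^{1/2} y² - y^{5/2}`. -/
theorem stmt1 (x y : ℝ) (hx : 0 ≤ x) (hy : 0 ≤ y) :
    -((15 / 8) * x ^ ((1 : ℝ) / 2) * y ^ 2) - y ^ ((5 : ℝ) / 2) ≤
      x ^ ((5 : ℝ) / 2) + (5 / 2) * x ^ ((3 : ℝ) / 2) * y - (x + y) ^ ((5 : ℝ) / 2) := by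
  set a := Real.sqrt x with hadef
  set b := Real.sqrt y with hbdef
  have ha : 0 ≤ a := Real.sqrt_nonneg x
  have hb : 0 ≤ b := Real.sqrt_nonneg y
  have hxa : x = a ^ 2 := (Real.sq_sqrt hx).symm
  have hyb : y = b ^ 2 := (Real.sq_sqrt hy).symm
  have h1 : x ^ ((1 : ℝ) / 2) = a ^ 1 := by
    have := aux_rpow x hx 1; norm_num at this ⊢; exact this
  have h3 : x ^ ((3 : ℝ) / 2) = a ^ 3 := by
    have := aux_rpow x hx 3; norm_num at this ⊢; exact this
  have h5 : x ^ ((5 : ℝ) / 2) = a ^ 5 := by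
    have := aux_rpow x hx 5; norm_num at this ⊢; exact this
  have hy5 : y ^ ((5 : ℝ) / 2) = b ^ 5 := by
    have := aux_rpow y hy 5; norm_num at this ⊢; exact this
  have hxy : 0 ≤ x + y := by linarith
  have hxy5 : (x + y) ^ ((5 : ℝ) / 2) = Real.sqrt (x + y) ^ 5 := by
    have := aux_rpow (x + y) hxy 5; norm_num at this ⊢; exact this
  set c := Real.sqrt (x + y) with hcdef
  have hc : 0 ≤ c := Real.sqrt_nonneg _
  have hc2 : c ^ 2 = a ^ 2 + b ^ 2 := by
    rw [hcdef, Real.sq_sqrt hxy, hxa, hyb]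
  have key : c ^ 5 ≤ a ^ 5 + 5 / 2 * a ^ 3 * b ^ 2 + 15 / 8 * a * b ^ 4 + b ^ 5 := by
    have hR : 0 ≤ a ^ 5 + 5 / 2 * a ^ 3 * b ^ 2 + 15 / 8 * a * b ^ 4 + b ^ 5 := by positivity
    have hsq : (c ^ 5) ^ 2 ≤ (a ^ 5 + 5 / 2 * a ^ 3 * b ^ 2 + 15 / 8 * a * b ^ 4 + b ^ 5) ^ 2 := by
      have : (c ^ 5) ^ 2 = (c ^ 2) ^ 5 := by ring
      rw [this, hc2]
      exact aux_poly a b ha hb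
    exact (pow_le_pow_iff_left₀ (pow_nonneg hc 5) hR two_ne_zero).mp hsq
  rw [h1, h3, h5, hy5, hxy5, hyb]
  nlinarith [key]
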